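/- arXiv:2605.19306 — 2 statements merged into one kernel-verified Lean document; each statement's English description precedes it below -/
import Mathlib

section
/- (Projection onto the downward hull) Let Q ⊆ ℝ^m be nonempty closed convex and Q⁺ := Q - ℝ^m₊. For every z̃ ∈ ℝ^m, the metric projection of z̃ onto Q⁺ equals min(z̃, y*) componentwise, where y* is any minimizer over y ∈ Q of ‖(z̃ - y)₊‖², with (·)₊ denoting the componentwise positive part. -/
def extDownHull {m : ℕ} (Q : Set (EuclideanSpace ℝ (Fin m))) :
    Set (EuclideanSpace ℝ (Fin m)) :=
  {z | ∃ y ∈ Q, ∃ u : EuclideanSpace ℝ (Fin m), (∀ i, 0 ≤ u i) ∧ z = y - u}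

theorem stmt_2 {m : ℕ} (Q : Set (EuclideanSpace ℝ (Fin m)))
    (hne : Q.Nonempty) (hcl : IsClosed Q) (hconv : Convex ℝ Q)
    (zt p ystar : EuclideanSpace ℝ (Fin m))
    -- `p` is the metric projection of `zt` onto `Q⁺`
    (hpmem : p ∈ extDownHull Q)
    (hpmin : ∀ w ∈ extDownHull Q, dist zt p ≤ dist zt w)
    -- `ystar` minimizes `‖(zt - y)₊‖²` over `y ∈ Q`
    (hymem : ystar ∈ Q)
    (hymin : ∀ y ∈ Q,
      (∑ i, max (zt i - ystar i) 0 ^ 2) ≤ ∑ i, max (zt i - y i) 0 ^ 2) :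
    ∀ i, p i = min (zt i) (ystar i) := by
  classical
  set q : EuclideanSpace ℝ (Fin m) := WithLp.toLp 2 (fun i => min (zt i) (ystar i)) with hqdef
  -- q is in the hull
  have hqmem : q ∈ extDownHull Q := by
    refine ⟨ystar, hymem, ystar - q, ?_, by abel⟩
    intro i
    have : (ystar - q) i = ystar i - q i := rfl
    rw [this, hqdef]
    simp [min_le_right]
  -- distance squared formula
  have hdsq : ∀ w : EuclideanSpace ℝ (Fin m),
      dist zt w ^ 2 = ∑ i, (zt i - w i) ^ 2 := by
    intro w
    rw [EuclideanSpace.dist_eq, Real.sq_sqrt (by positivity)]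
    congr 1; funext i; rw [Real.dist_eq, sq_abs]
  have hqval : ∀ i, zt i - q i = max (zt i - ystar i) 0 := by
    intro i
    rcases le_total (zt i) (ystar i) with h | h
    · simp [hqdef, min_eq_left h, max_eq_right (by linarith : zt i - ystar i ≤ 0)]
    · simp [hqdef, min_eq_right h, max_eq_left (by linarith : 0 ≤ zt i - ystar i)]
  -- key: q minimizes the squared distance over the hull
  have key : ∀ w ∈ extDownHull Q, dist zt q ^ 2 ≤ dist zt w ^ 2 := by
    rintro w ⟨y, hy, u, hu, rfl⟩
    rw [hdsq, hdsq]
    calc ∑ i, (zt i - q i) ^ 2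
        = ∑ i, max (zt i - ystar i) 0 ^ 2 := by
          congr 1; funext i; rw [hqval i]
      _ ≤ ∑ i, max (zt i - y i) 0 ^ 2 := hymin y hy
      _ ≤ ∑ i, (zt i - (y - u) i) ^ 2 := by
          refine Finset.sum_le_sum fun i _ => ?_
          have hyu : (y - u) i = y i - u i := rfl
          rw [hyu]
          rcases le_total (zt i - y i) 0 with h | h
          · rw [max_eq_right h]
            simpa using sq_nonneg (zt i - (y i - u i))
          · rw [max_eq_left h]
            have h1 : 0 ≤ zt i - y i := h
            have h2 : zt i - y i ≤ zt i - (y i - u i) := by linarith [hu i]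
            exact pow_le_pow_left₀ h1 h2 2
  -- hence dist zt p = dist zt q
  have hdeq : dist zt p = dist zt q := by
    refine le_antisymm (hpmin q hqmem) ?_
    have h := key p hpmem
    exact (pow_le_pow_iff_left₀ dist_nonneg dist_nonneg (by norm_num)).mp h
  -- midpoint is in the hull
  obtain ⟨y1, hy1, u1, hu1, hp⟩ := hpmem
  obtain ⟨y2, hy2, u2, hu2, hq2⟩ := hqmem
  set r : EuclideanSpace ℝ (Fin m) := (1/2 : ℝ) • p + (1/2 : ℝ) • q with hrdef
  have hrmem : r ∈ extDownHull Q := by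
    refine ⟨(1/2 : ℝ) • y1 + (1/2 : ℝ) • y2,
      hconv hy1 hy2 (by norm_num) (by norm_num) (by norm_num),
      (1/2 : ℝ) • u1 + (1/2 : ℝ) • u2, ?_, ?_⟩
    · intro i
      have h1 : ((1/2 : ℝ) • u1 + (1/2 : ℝ) • u2) i = (1/2) * u1 i + (1/2) * u2 i := rfl
      rw [h1]
      have := hu1 i; have := hu2 i; linarith
    · rw [hrdef, hp, hq2]
      rw [smul_sub, smul_sub]; abel
  -- parallelogram law
  have hpar := parallelogram_law_with_norm ℝ (zt - p) (zt - q)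
  have h1 : zt - p + (zt - q) = (2 : ℝ) • (zt - r) := by
    rw [hrdef]; module
  have h2 : zt - p - (zt - q) = q - p := by module
  rw [h1, h2, norm_smul] at hpar
  have hnp : ‖zt - p‖ = dist zt p := (dist_eq_norm zt p).symm
  have hnq : ‖zt - q‖ = dist zt q := (dist_eq_norm zt q).symm
  have hnr : ‖zt - r‖ = dist zt r := (dist_eq_norm zt r).symm
  rw [hnp, hnq, hnr] at hpar
  have hr : dist zt p ≤ dist zt r := hpmin r hrmem
  have h2norm : ‖(2 : ℝ)‖ = 2 := by norm_num
  rw [h2norm] at hpar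
  have hqp : ‖q - p‖ ^ 2 ≤ 0 := by nlinarith [dist_nonneg (x := zt) (y := p), dist_nonneg (x := zt) (y := r)]
  have hz : ‖q - p‖ = 0 := by nlinarith [norm_nonneg (q - p)]
  have hpq : p = q := (sub_eq_zero.mp (norm_eq_zero.mp hz)).symm
  intro i
  rw [hpq]
end

section
/- (Global subgradient inequality for the non-convex image-feasibility function) Let f₁,...,f_m : ℝ^n → ℝ be convex and C¹, Q⁺ ⊆ ℝ^m nonempty closed convex, x⁰ ∈ ℝ^n, p := P_{Q⁺}(F(x⁰)), ρ := F(x⁰) - p (assumed componentwise ≥ 0), v := J_F(x⁰)ᵀ ρ, and G(x) := ½ dist(F(x), Q⁺)². Then G(y) ≥ G(x⁰) + ⟨v, y - x⁰⟩ for all y ∈ ℝ^n. -/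
open scoped RealInnerProductSpace

lemma aux_subgrad {E : Type*} [NormedAddCommGroup E] [InnerProductSpace ℝ E]
    [CompleteSpace E] (f : E → ℝ) (hf : ConvexOn ℝ Set.univ f) (x y gx : E)
    (hg : HasGradientAt f gx x) : f x + ⟪gx, y - x⟫ ≤ f y := by
  set c : ℝ → E := fun t => x + t • (y - x) with hcdef
  have hc : ∀ t : ℝ, HasDerivAt c (y - x) t := fun t => by
    simpa [hcdef] using ((hasDerivAt_id t).smul_const (y - x)).const_add x
  have hconv : ConvexOn ℝ Set.univ (f ∘ c) := by
    have := hf.comp_affineMap (AffineMap.lineMap x y : ℝ →ᵃ[ℝ] E)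
    simp only [Set.preimage_univ] at this
    have heq : c = ⇑(AffineMap.lineMap x y : ℝ →ᵃ[ℝ] E) := by
      funext t
      simp [hcdef, AffineMap.lineMap_apply, add_comm]
    rw [heq]; exact this
  have hφd : HasDerivAt (f ∘ c) ⟪gx, y - x⟫ 0 := by
    have h1 : HasFDerivAt f (InnerProductSpace.toDual ℝ E gx) x := hg
    have h2 : HasDerivAt c (y - x) 0 := hc 0
    have hc0 : c 0 = x := by simp [hcdef]
    rw [← hc0] at h1
    have := h1.comp_hasDerivAt (0 : ℝ) h2
    simpa using this
  have hs := hconv.le_slope_of_hasDerivAt (Set.mem_univ (0:ℝ)) (Set.mem_univ (1:ℝ))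
    one_pos hφd
  rw [slope_def_field] at hs
  have hc1 : c 1 = y := by simp [hcdef]
  have hc0 : c 0 = x := by simp [hcdef]
  simp only [Function.comp, hc1, hc0] at hs
  norm_num at hs
  linarith

set_option maxHeartbeats 1000000 in
theorem stmt_11 {n m : ℕ} (Qp : Set (EuclideanSpace ℝ (Fin m)))
    (hne : Qp.Nonempty) (hcl : IsClosed Qp) (hconv : Convex ℝ Qp)
    (f : Fin m → EuclideanSpace ℝ (Fin n) → ℝ)
    (hf : ∀ i, ConvexOn ℝ Set.univ (f i))
    (hf1 : ∀ i, ContDiff ℝ 1 (f i))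
    (F : EuclideanSpace ℝ (Fin n) → EuclideanSpace ℝ (Fin m))
    (hFdef : ∀ x i, F x i = f i x)
    (x0 : EuclideanSpace ℝ (Fin n)) (p : EuclideanSpace ℝ (Fin m))
    -- `p` is the metric projection of `F x0` onto `Qp`
    (hpmem : p ∈ Qp)
    (hpmin : ∀ w ∈ Qp, dist (F x0) p ≤ dist (F x0) w)
    (ρ : EuclideanSpace ℝ (Fin m)) (hρdef : ρ = F x0 - p)
    (hρnn : ∀ i, 0 ≤ ρ i)
    (g : Fin m → EuclideanSpace ℝ (Fin n))
    (hg : ∀ i, HasGradientAt (f i) (g i) x0)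
    (G : EuclideanSpace ℝ (Fin n) → ℝ)
    (hG : ∀ x, G x = (1 / 2) * Metric.infDist (F x) Qp ^ 2) :
    ∀ y, G y ≥ G x0 + ⟪∑ i, ρ i • g i, y - x0⟫ := by
  intro y
  -- projection inequality
  have hproj : ∀ w ∈ Qp, ⟪ρ, w - p⟫ ≤ 0 := by
    have hinf : ‖F x0 - p‖ = ⨅ w : Qp, ‖F x0 - w‖ := by
      haveI : Nonempty Qp := ⟨⟨p, hpmem⟩⟩
      apply le_antisymm
      · apply le_ciInf
        intro w
        have := hpmin w w.2
        simpa [dist_eq_norm] using this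
      · have hb : BddBelow (Set.range fun w : Qp => ‖F x0 - (w : EuclideanSpace ℝ (Fin m))‖) := by
          refine ⟨0, ?_⟩
          rintro _ ⟨w, rfl⟩
          exact norm_nonneg _
        exact ciInf_le hb ⟨p, hpmem⟩
    rw [hρdef]
    exact (norm_eq_iInf_iff_real_inner_le_zero hconv hpmem).mp hinf
  -- G x0 = 1/2 ‖ρ‖²
  have hdx0 : Metric.infDist (F x0) Qp = ‖ρ‖ := by
    haveI : Nonempty Qp := ⟨⟨p, hpmem⟩⟩
    have h1 : Metric.infDist (F x0) Qp = dist (F x0) p := by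
      refine le_antisymm (Metric.infDist_le_dist_of_mem hpmem) ?_
      rw [Metric.infDist_eq_iInf]
      exact le_ciInf fun w => hpmin w w.2
    rw [h1, dist_eq_norm, hρdef]
  -- subgradient inequality summed
  have hsub : ∀ i, f i x0 + ⟪g i, y - x0⟫ ≤ f i y := fun i =>
    aux_subgrad (f i) (hf i) x0 y (g i) (hg i)
  have hv : ⟪∑ i, ρ i • g i, y - x0⟫ = ∑ i, ρ i * ⟪g i, y - x0⟫ := by
    rw [sum_inner]
    exact Finset.sum_congr rfl fun i _ => real_inner_smul_left _ _ _
  have hsum : ⟪∑ i, ρ i • g i, y - x0⟫ ≤ ⟪ρ, F y - F x0⟫ := by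
    rw [hv]
    have hFsub : ⟪ρ, F y - F x0⟫ = ∑ i, ρ i * (f i y - f i x0) := by
      simp only [PiLp.inner_apply, RCLike.inner_apply, conj_trivial, PiLp.sub_apply, hFdef]
      exact Finset.sum_congr rfl fun i _ => mul_comm _ _
    rw [hFsub]
    apply Finset.sum_le_sum
    intro i _
    exact mul_le_mul_of_nonneg_left (by linarith [hsub i]) (hρnn i)
  -- pick the projection of F y
  obtain ⟨w, hw, hdw⟩ := hcl.exists_infDist_eq_dist hne (F y)
  have hGy : G y = 1 / 2 * ‖F y - w‖ ^ 2 := by rw [hG, hdw, dist_eq_norm]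
  have hGx0 : G x0 = 1 / 2 * ‖ρ‖ ^ 2 := by rw [hG, hdx0]
  have h1 : ⟪ρ, F y - w⟫ ≤ ‖ρ‖ * ‖F y - w‖ := real_inner_le_norm _ _
  have h2 : ⟪ρ, w - p⟫ ≤ 0 := hproj w hw
  have h4 : ⟪ρ, p - w⟫ = -⟪ρ, w - p⟫ := by
    rw [← inner_neg_right]; congr 1; abel
  have hdecomp : ⟪ρ, F y - w⟫ = ⟪ρ, F y - F x0⟫ + ‖ρ‖ ^ 2 + ⟪ρ, p - w⟫ := by
    have h3 : F y - w = (F y - F x0) + (F x0 - p) + (p - w) := by abel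
    rw [h3, inner_add_right, inner_add_right, ← hρdef, real_inner_self_eq_norm_sq]
  rw [ge_iff_le, hGy, hGx0]
  nlinarith [sq_nonneg (‖F y - w‖ - ‖ρ‖), hsum, h1, h2, h4, hdecomp]
end
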